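/- If W₁ and W₂ are Weil algebras and f, g : W₁ → W₂ are ℝ-algebra homomorphisms, then the equalizer subalgebra {a ∈ W₁ : f(a) = g(a)} is again a Weil algebra: it is finite-dimensional over ℝ, it is a local ring, and its residue field is isomorphic to ℝ as an ℝ-algebra. -/

import Mathlib

noncomputable section

open IsLocalRing

lemma equalizer_isUnit {W1 W2 : Type} [CommRing W1] [CommRing W2]
    [Algebra ℝ W1] [Algebra ℝ W2] (f g : W1 →ₐ[ℝ] W2)
    (e : AlgHom.equalizer f g) (h : IsUnit (e : W1)) : IsUnit e := by
  obtain ⟨u, hu⟩ := h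
  have h1 : f ↑u⁻¹ * f (e : W1) = 1 := by
    rw [← map_mul, ← hu, Units.inv_mul, map_one]
  have h2 : g ↑u⁻¹ * g (e : W1) = 1 := by
    rw [← map_mul, ← hu, Units.inv_mul, map_one]
  have he : f (e : W1) = g (e : W1) := e.2
  have hunit : IsUnit (f (e : W1)) := by
    refine ⟨⟨f (e : W1), f ↑u⁻¹, ?_, h1⟩, rfl⟩
    rw [← map_mul, ← hu, Units.mul_inv, map_one]
  have hinv : f (↑u⁻¹ : W1) = g (↑u⁻¹ : W1) :=
    hunit.mul_left_cancel (by rw [mul_comm, h1, he, mul_comm, h2])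
  refine IsUnit.of_mul_eq_one (a := e) ⟨(↑u⁻¹ : W1), hinv⟩ ?_
  ext
  show (e : W1) * ↑u⁻¹ = 1
  rw [← hu, Units.mul_inv]

set_option maxHeartbeats 1000000 in
theorem equalizer_of_weil_is_weil (W1 W2 : Type) [CommRing W1] [CommRing W2]
    [Algebra ℝ W1] [Algebra ℝ W2]
    [FiniteDimensional ℝ W1] [IsLocalRing W1]
    (h1 : Nonempty (IsLocalRing.ResidueField W1 ≃ₐ[ℝ] ℝ))
    [FiniteDimensional ℝ W2] [IsLocalRing W2]
    (h2 : Nonempty (IsLocalRing.ResidueField W2 ≃ₐ[ℝ] ℝ))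
    (f g : W1 →ₐ[ℝ] W2) :
    FiniteDimensional ℝ (AlgHom.equalizer f g) ∧
    ∃ hloc : IsLocalRing (AlgHom.equalizer f g),
      letI := hloc
      Nonempty (IsLocalRing.ResidueField (AlgHom.equalizer f g) ≃ₐ[ℝ] ℝ) := by
  set E := AlgHom.equalizer f g
  obtain ⟨eqv⟩ := h1
  -- residue map as an ℝ-algebra hom
  have hfd : FiniteDimensional ℝ E := inferInstance
  have hnt : Nontrivial E :=
    ⟨0, 1, fun h => zero_ne_one (α := W1) (by simpa using congrArg Subtype.val h)⟩
  -- key dichotomy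
  have hkey : ∀ a : E, IsUnit a ∨ IsUnit (1 - a) := by
    intro a
    rcases IsLocalRing.isUnit_or_isUnit_one_sub_self (a : W1) with h | h
    · exact Or.inl (equalizer_isUnit f g a h)
    · exact Or.inr (equalizer_isUnit f g (1 - a) (by push_cast; exact h))
  have hloc : IsLocalRing E := IsLocalRing.of_isUnit_or_isUnit_one_sub_self hkey
  refine ⟨hfd, hloc, ?_⟩
  letI := hloc
  haveI : IsScalarTower ℝ W1 (ResidueField W1) := IsScalarTower.of_algebraMap_eq fun _ => rfl
  haveI : IsScalarTower ℝ W1 (ResidueField W1) := IsScalarTower.of_algebraMap_eq fun _ => rfl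
  -- ψ : E →ₐ[ℝ] ℝ
  let φ : W1 →ₐ[ℝ] ℝ := eqv.toAlgHom.comp (IsScalarTower.toAlgHom ℝ W1 (ResidueField W1))
  let ψ : E →ₐ[ℝ] ℝ := φ.comp E.val
  have hψsurj : Function.Surjective ψ := fun r => ⟨algebraMap ℝ E r, by simp [ψ]⟩
  have hker : RingHom.ker ψ = maximalIdeal E := by
    ext a
    simp only [RingHom.mem_ker, IsLocalRing.mem_maximalIdeal, mem_nonunits_iff]
    constructor
    · intro h hun
      have : IsUnit ((a : W1)) := hun.map E.val
      have : IsUnit (ψ a) := this.map φ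
      rw [h] at this
      exact this.ne_zero rfl
    · intro h
      by_contra hne
      apply h
      apply equalizer_isUnit f g a
      have : IsUnit (φ (a : W1)) := (isUnit_iff_ne_zero).2 hne
      have h2 : IsUnit ((IsScalarTower.toAlgHom ℝ W1 (ResidueField W1)) (a : W1)) := by
        by_contra hx
        apply this.ne_zero
        have : residue W1 (a : W1) = 0 := by
          rwa [isUnit_iff_ne_zero, not_not,
            show ((IsScalarTower.toAlgHom ℝ W1 (ResidueField W1)) (a : W1) : ResidueField W1)
              = residue W1 (a : W1) from rfl] at hx
        simp [φ, this]
      rw [show ((IsScalarTower.toAlgHom ℝ W1 (ResidueField W1)) (a : W1) : ResidueField W1)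
              = residue W1 (a : W1) from rfl] at h2
      by_contra hnu
      exact h2.ne_zero ((residue_eq_zero_iff _).2 ((mem_maximalIdeal _).2 (mem_nonunits_iff.2 hnu)))
  have e1 : (E ⧸ RingHom.ker ψ.toRingHom) ≃ₐ[ℝ] ℝ :=
    Ideal.quotientKerAlgEquivOfSurjective hψsurj
  have hker' : RingHom.ker ψ.toRingHom = maximalIdeal E := hker
  have e2 : (E ⧸ maximalIdeal E) ≃ₐ[ℝ] (E ⧸ RingHom.ker ψ.toRingHom) :=
    Ideal.quotientEquivAlgOfEq ℝ hker'.symm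
  exact ⟨AlgEquiv.ofRingEquiv (f := (e2.trans e1).toRingEquiv)
    (fun x => (e2.trans e1).commutes x)⟩

end
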